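/- For every real c > 0, \int_{-8\pi/75}^{8\pi/75} \exp(c(-x^2 + (7/3)x^4)) dx \le \sqrt{\pi/c} \, e^{3/c}. -/

import Mathlib

open Real MeasureTheory intervalIntegral

lemma cosh_quadratic_bound (u : ℝ) : 1 + u ^ 2 / 2 ≤ Real.cosh u := by
  have h2 : Real.cosh u = 1 + 2 * Real.sinh (u / 2) ^ 2 := by
    have hd := Real.cosh_two_mul (u / 2)
    have hs := Real.cosh_sq (u / 2)
    have : (2 : ℝ) * (u / 2) = u := by ring
    rw [this] at hd
    rw [hd, hs]; ring
  have h3 : (u / 2) ^ 2 ≤ Real.sinh (u / 2) ^ 2 := by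
    rcases le_total 0 u with h | h
    · have h0 : (0:ℝ) ≤ u / 2 := by linarith
      have := Real.self_le_sinh_iff.mpr h0
      nlinarith
    · have h0 : u / 2 ≤ 0 := by linarith
      have hs : Real.sinh (u / 2) ≤ u / 2 := by
        have := Real.self_le_sinh_iff.mpr (by linarith : (0:ℝ) ≤ -(u / 2))
        rw [Real.sinh_neg] at this; linarith
      have hsn : Real.sinh (u / 2) ≤ 0 := Real.sinh_nonpos_iff.mpr h0
      nlinarith
  nlinarith [h2]

lemma sinh_cubic_bound {v : ℝ} (hv : 0 ≤ v) : v + v ^ 3 / 6 ≤ Real.sinh v := by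
  set F : ℝ → ℝ := fun t => Real.sinh t - t - t ^ 3 / 6 with hF
  have hder : ∀ t : ℝ, HasDerivAt F (Real.cosh t - 1 - t ^ 2 / 2) t := by
    intro t
    have h1 : HasDerivAt (fun t : ℝ => t ^ 3 / 6) (3 * t ^ 2 / 6) t := by
      simpa using (hasDerivAt_pow 3 t).div_const 6
    have := ((Real.hasDerivAt_sinh t).sub (hasDerivAt_id t)).sub h1
    exact this.congr_deriv (by ring)
  have hmono : MonotoneOn F (Set.Ici (0:ℝ)) := by
    apply monotoneOn_of_deriv_nonneg (convex_Ici 0)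
    · exact (Continuous.continuousOn (by continuity))
    · intro t ht
      exact (hder t).differentiableAt.differentiableWithinAt
    · intro t ht
      rw [(hder t).deriv]
      have := cosh_quadratic_bound t
      linarith
  have := hmono (Set.self_mem_Ici) (Set.mem_Ici.mpr hv) hv
  simp [hF] at this
  linarith [this]


lemma key_aux {x : ℝ} (hx0 : 0 ≤ x) (hx2 : x ^ 2 ≤ 0.1129) :
    Real.arsinh (Real.sqrt 12 * x) ^ 2 ≤ 12 * x ^ 2 - 28 * x ^ 4 := by
  have hs0 : 0 ≤ 12 * x ^ 2 - 28 * x ^ 4 := by nlinarith [sq_nonneg x]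
  set v := Real.sqrt (12 * x ^ 2 - 28 * x ^ 4) with hvdef
  have hv2 : v ^ 2 = 12 * x ^ 2 - 28 * x ^ 4 := Real.sq_sqrt hs0
  have hv0 : 0 ≤ v := Real.sqrt_nonneg _
  have hpoly : 12 * x ^ 2 ≤ (v + v ^ 3 / 6) ^ 2 := by
    have expand : (v + v ^ 3 / 6) ^ 2 = v ^ 2 + (v ^ 2) ^ 2 / 3 + (v ^ 2) ^ 3 / 36 := by ring
    rw [expand, hv2]
    nlinarith [sq_nonneg x, sq_nonneg (x ^ 2), hx2, hx0, sq_nonneg (x ^ 3),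
      mul_nonneg (mul_nonneg (sq_nonneg x) (sq_nonneg x)) (sub_nonneg.mpr hx2),
      mul_nonneg (sq_nonneg (x ^ 2)) (sub_nonneg.mpr hx2)]
  have hB : 0 ≤ v + v ^ 3 / 6 := by positivity
  have hA0 : 0 ≤ Real.sqrt 12 * x := mul_nonneg (Real.sqrt_nonneg _) hx0
  have h12x : (Real.sqrt 12 * x) ^ 2 = 12 * x ^ 2 := by
    rw [mul_pow, Real.sq_sqrt (by norm_num : (12:ℝ) ≥ 0)]
  have hsx : Real.sqrt 12 * x ≤ v + v ^ 3 / 6 := by nlinarith [hpoly, h12x, hA0, hB]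
  have harsinh : Real.arsinh (Real.sqrt 12 * x) ≤ v := by
    have h1 : Real.sqrt 12 * x ≤ Real.sinh v := le_trans hsx (sinh_cubic_bound hv0)
    have h2 := Real.arsinh_le_arsinh.mpr h1
    rwa [Real.arsinh_sinh] at h2
  have hnn : 0 ≤ Real.arsinh (Real.sqrt 12 * x) := Real.arsinh_nonneg_iff.mpr hA0
  nlinarith [harsinh, hnn, hv2]

lemma key_ineq {x : ℝ} (hx2 : x ^ 2 ≤ 0.1129) :
    Real.arsinh (Real.sqrt 12 * x) ^ 2 ≤ 12 * x ^ 2 - 28 * x ^ 4 := by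
  rcases le_total 0 x with h | h
  · exact key_aux h hx2
  · have hx2' : (-x) ^ 2 ≤ 0.1129 := by rw [neg_pow]; simpa using hx2
    have := key_aux (by linarith : (0:ℝ) ≤ -x) hx2'
    rw [mul_neg, Real.arsinh_neg] at this
    calc Real.arsinh (Real.sqrt 12 * x) ^ 2
        = (-Real.arsinh (Real.sqrt 12 * x)) ^ 2 := by ring
      _ ≤ 12 * (-x) ^ 2 - 28 * (-x) ^ 4 := this
      _ = 12 * x ^ 2 - 28 * x ^ 4 := by ring

lemma cosh_gauss_rw (c : ℝ) (hc : 0 < c) (y : ℝ) :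
    Real.cosh (Real.sqrt 12 * y) * Real.exp (-(c * y ^ 2)) =
      Real.exp (3 / c) / 2 *
        (Real.exp (-(c * (y - Real.sqrt 12 / (2 * c)) ^ 2)) +
         Real.exp (-(c * (y + Real.sqrt 12 / (2 * c)) ^ 2))) := by
  have hs12 : Real.sqrt 12 ^ 2 = 12 := Real.sq_sqrt (by norm_num)
  rw [Real.cosh_eq]
  rw [div_mul_eq_mul_div, add_mul, ← Real.exp_add, ← Real.exp_add]
  have e1 : Real.sqrt 12 * y + -(c * y ^ 2) =
      3 / c + -(c * (y - Real.sqrt 12 / (2 * c)) ^ 2) := by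
    field_simp
    ring_nf
    nlinarith [hs12]
  have e2 : -(Real.sqrt 12 * y) + -(c * y ^ 2) =
      3 / c + -(c * (y + Real.sqrt 12 / (2 * c)) ^ 2) := by
    field_simp
    ring_nf
    nlinarith [hs12]
  rw [e1, e2, Real.exp_add, Real.exp_add]
  ring

lemma integrable_cosh_gauss (c : ℝ) (hc : 0 < c) :
    Integrable (fun y : ℝ => Real.cosh (Real.sqrt 12 * y) * Real.exp (-(c * y ^ 2))) := by
  have hbase : Integrable (fun y : ℝ => Real.exp (-c * y ^ 2)) := integrable_exp_neg_mul_sq hc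
  have h1 : Integrable (fun y : ℝ => Real.exp (-(c * (y - Real.sqrt 12 / (2 * c)) ^ 2))) := by
    simpa [neg_mul] using hbase.comp_sub_right (Real.sqrt 12 / (2 * c))
  have h2 : Integrable (fun y : ℝ => Real.exp (-(c * (y + Real.sqrt 12 / (2 * c)) ^ 2))) := by
    simpa [neg_mul] using hbase.comp_add_right (Real.sqrt 12 / (2 * c))
  have := ((h1.add h2).const_mul (Real.exp (3 / c) / 2))
  refine this.congr ?_
  filter_upwards with y
  exact (cosh_gauss_rw c hc y).symm

lemma cosh_gauss_integral (c : ℝ) (hc : 0 < c) :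
    ∫ y : ℝ, Real.cosh (Real.sqrt 12 * y) * Real.exp (-(c * y ^ 2)) =
      Real.sqrt (Real.pi / c) * Real.exp (3 / c) := by
  have hbase : Integrable (fun y : ℝ => Real.exp (-c * y ^ 2)) := integrable_exp_neg_mul_sq hc
  have h1 : Integrable (fun y : ℝ => Real.exp (-(c * (y - Real.sqrt 12 / (2 * c)) ^ 2))) := by
    simpa [neg_mul] using hbase.comp_sub_right (Real.sqrt 12 / (2 * c))
  have h2 : Integrable (fun y : ℝ => Real.exp (-(c * (y + Real.sqrt 12 / (2 * c)) ^ 2))) := by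
    simpa [neg_mul] using hbase.comp_add_right (Real.sqrt 12 / (2 * c))
  calc ∫ y : ℝ, Real.cosh (Real.sqrt 12 * y) * Real.exp (-(c * y ^ 2))
      = ∫ y : ℝ, Real.exp (3 / c) / 2 *
          (Real.exp (-(c * (y - Real.sqrt 12 / (2 * c)) ^ 2)) +
           Real.exp (-(c * (y + Real.sqrt 12 / (2 * c)) ^ 2))) := by
        congr 1; funext y; exact cosh_gauss_rw c hc y
    _ = Real.exp (3 / c) / 2 *
          ((∫ y : ℝ, Real.exp (-(c * (y - Real.sqrt 12 / (2 * c)) ^ 2))) +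
           (∫ y : ℝ, Real.exp (-(c * (y + Real.sqrt 12 / (2 * c)) ^ 2)))) := by
        rw [MeasureTheory.integral_const_mul, integral_add h1 h2]
    _ = Real.exp (3 / c) / 2 * (Real.sqrt (Real.pi / c) + Real.sqrt (Real.pi / c)) := by
        congr 1
        have ha : (∫ y : ℝ, Real.exp (-(c * (y - Real.sqrt 12 / (2 * c)) ^ 2)))
            = ∫ y : ℝ, Real.exp (-(c * y ^ 2)) :=
          integral_sub_right_eq_self (fun y : ℝ => Real.exp (-(c * y ^ 2))) _
        have hb : (∫ y : ℝ, Real.exp (-(c * (y + Real.sqrt 12 / (2 * c)) ^ 2)))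
            = ∫ y : ℝ, Real.exp (-(c * y ^ 2)) :=
          integral_add_right_eq_self (fun y : ℝ => Real.exp (-(c * y ^ 2))) _
        rw [ha, hb]
        have := integral_gaussian c
        simp only [neg_mul] at this ⊢
        rw [this]
    _ = Real.sqrt (Real.pi / c) * Real.exp (3 / c) := by ring







theorem gaussian_type_integral_bound (c : ℝ) (hc : 0 < c) :
    ∫ x in (-(8 * Real.pi / 75))..(8 * Real.pi / 75),
        Real.exp (c * (-x ^ 2 + (7/3) * x ^ 4)) ≤
      Real.sqrt (Real.pi / c) * Real.exp (3 / c) := by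
  set a : ℝ := 8 * Real.pi / 75 with ha_def
  have hpi : Real.pi < 3.15 := by
    have := Real.pi_lt_d2
    norm_num at this ⊢
    linarith
  have ha0 : 0 < a := by positivity
  have ha : a ≤ 0.336 := by rw [ha_def]; nlinarith [hpi]
  have hs12pos : (0:ℝ) < Real.sqrt 12 := Real.sqrt_pos.mpr (by norm_num)
  have hs12 : Real.sqrt 12 ^ 2 = 12 := Real.sq_sqrt (by norm_num)
  -- the substitution map
  set m : ℝ → ℝ := fun x => (Real.sqrt 12)⁻¹ * Real.arsinh (Real.sqrt 12 * x) with hm_def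
  set m' : ℝ → ℝ := fun x => (Real.sqrt (1 + 12 * x ^ 2))⁻¹ with hm'_def
  set g : ℝ → ℝ := fun y => Real.cosh (Real.sqrt 12 * y) * Real.exp (-(c * y ^ 2)) with hg_def
  have hwpos : ∀ x : ℝ, 0 < Real.sqrt (1 + 12 * x ^ 2) := fun x =>
    Real.sqrt_pos.mpr (by positivity)
  have hsq : ∀ x : ℝ, (Real.sqrt 12 * x) ^ 2 = 12 * x ^ 2 := fun x => by
    rw [mul_pow, hs12]
  have hm : ∀ x : ℝ, HasDerivAt m (m' x) x := by
    intro x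
    have h1 : HasDerivAt (fun x : ℝ => Real.sqrt 12 * x) (Real.sqrt 12) x := by
      simpa using (hasDerivAt_id x).const_mul (Real.sqrt 12)
    have h2 : HasDerivAt (fun x : ℝ => Real.arsinh (Real.sqrt 12 * x))
        ((Real.sqrt (1 + (Real.sqrt 12 * x) ^ 2))⁻¹ * Real.sqrt 12) x :=
      (Real.hasDerivAt_arsinh _).comp x h1
    have h3 := h2.const_mul (Real.sqrt 12)⁻¹
    refine h3.congr_deriv ?_
    rw [hsq x, hm'_def]
    simp only []
    rw [mul_comm, mul_assoc, mul_inv_cancel₀ hs12pos.ne', mul_one]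
  -- g composed with m
  have hgm : ∀ x : ℝ, m' x * g (m x) = Real.exp (-(c * (m x) ^ 2)) := by
    intro x
    have h1 : Real.sqrt 12 * m x = Real.arsinh (Real.sqrt 12 * x) := by
      rw [hm_def]; field_simp
    rw [hg_def]
    simp only []
    rw [h1, Real.cosh_arsinh, hsq x, hm'_def]
    field_simp
  -- pointwise bound
  have hpoint : ∀ x ∈ Set.Icc (-a) a,
      Real.exp (c * (-x ^ 2 + (7/3) * x ^ 4)) ≤ m' x * g (m x) := by
    intro x hx
    rw [hgm x]
    apply Real.exp_le_exp.mpr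
    have hx2 : x ^ 2 ≤ 0.1129 := by
      have h1 : |x| ≤ a := abs_le.mpr ⟨hx.1, hx.2⟩
      have := sq_abs x
      nlinarith [h1, ha, abs_nonneg x]
    have hk := key_ineq hx2
    have hmx : (m x) ^ 2 = Real.arsinh (Real.sqrt 12 * x) ^ 2 / 12 := by
      rw [hm_def]
      simp only []
      rw [mul_pow]
      rw [inv_pow, hs12]
      ring
    rw [hmx]
    nlinarith [hk, hc.le]
  -- integrability
  have hcont_g : Continuous g := by
    rw [hg_def]
    exact (Real.continuous_cosh.comp (continuous_const.mul continuous_id)).mul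
      (Real.continuous_exp.comp ((continuous_const.mul (continuous_pow 2)).neg))
  have hcont_m' : Continuous m' := by
    rw [hm'_def]
    exact (Real.continuous_sqrt.comp (by continuity)).inv₀ fun x => (hwpos x).ne'
  have hcont_m : Continuous m := by
    rw [hm_def]; exact continuous_const.mul (Real.continuous_arsinh.comp (continuous_const.mul continuous_id))
  have hle : -a ≤ a := by linarith
  -- step 1 : mono
  have step1 : (∫ x in (-a)..a, Real.exp (c * (-x ^ 2 + (7/3) * x ^ 4)))
      ≤ ∫ x in (-a)..a, m' x * g (m x) := by
    apply intervalIntegral.integral_mono_on hle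
    · refine Continuous.intervalIntegrable ?_ _ _
      exact Real.continuous_exp.comp (continuous_const.mul
        (((continuous_pow 2).neg).add (continuous_const.mul (continuous_pow 4))))
    · exact ((hcont_m'.mul (hcont_g.comp hcont_m)).intervalIntegrable _ _)
    · exact hpoint
  -- step 2 : substitution
  have step2 : (∫ x in (-a)..a, m' x * g (m x)) = ∫ y in m (-a)..m a, g y := by
    have := intervalIntegral.integral_comp_smul_deriv
      (f := m) (f' := m') (g := g) (a := -a) (b := a)
      (fun x _ => hm x) (hcont_m'.continuousOn) hcont_g
    simpa [Function.comp] using this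
  -- step 3 : extend to ℝ
  have hma : m (-a) = -(m a) := by
    rw [hm_def]; simp only [mul_neg, Real.arsinh_neg]
  have hma0 : 0 ≤ m a := by
    rw [hm_def]
    have : 0 ≤ Real.arsinh (Real.sqrt 12 * a) :=
      Real.arsinh_nonneg_iff.mpr (by positivity)
    positivity
  have hgnn : ∀ y : ℝ, 0 ≤ g y := fun y => by
    rw [hg_def]
    exact mul_nonneg (Real.cosh_pos _).le (Real.exp_pos _).le
  have step3 : (∫ y in m (-a)..m a, g y) ≤ ∫ y : ℝ, g y := by
    rw [hma, intervalIntegral.integral_of_le (by linarith : -(m a) ≤ m a)]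
    exact setIntegral_le_integral (integrable_cosh_gauss c hc)
      (Filter.Eventually.of_forall hgnn)
  calc (∫ x in (-a)..a, Real.exp (c * (-x ^ 2 + (7/3) * x ^ 4)))
      ≤ ∫ x in (-a)..a, m' x * g (m x) := step1
    _ = ∫ y in m (-a)..m a, g y := step2
    _ ≤ ∫ y : ℝ, g y := step3
    _ = Real.sqrt (Real.pi / c) * Real.exp (3 / c) := cosh_gauss_integral c hc
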